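/- Let k be an algebraically closed field, let B ⊆ 𝔸² × ℙ¹ be the blow-up of the affine plane 𝔸² at the origin, i.e. the closed subvariety {((x,y),[a:b]) : x·b = y·a}, and let ∞ := ((0,0),[0:1]) be the point of the exceptional line corresponding to the second coordinate axis. Then the morphism p : B ∖ {∞} → 𝔸² induced by the projection to 𝔸² is surjective, but p does not satisfy the curve covering property: for the irreducible curve Y' = {x = 0} ⊆ 𝔸² and the closed point y = (0,0) ∈ Y', there is no irreducible curve X' ⊆ B ∖ {∞} with y ∈ p(X') ⊆ Y' and p(X') dense in Y'. In particular, p is surjective but not submersive. -/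

import Mathlib

universe u

noncomputable section

/-- The affine plane `𝔸²` over `k` (classical points). -/
structure Plane (k : Type u) where
  x : k
  y : k

/-- The Zariski vanishing locus in the plane of a polynomial in two variables. -/
def planeLocus (k : Type u) [Field k] (f : MvPolynomial (Fin 2) k) : Set (Plane k) :=
  {p | MvPolynomial.eval ![p.x, p.y] f = 0}

/-- The Zariski topology on the affine plane. -/
instance (k : Type u) [Field k] : TopologicalSpace (Plane k) :=
  .generateFrom {U | ∃ f : MvPolynomial (Fin 2) k, U = (planeLocus k f)ᶜ}

/-- The classical points of `𝔸² × ℙ¹` over `k`. -/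
structure ProdSpace (k : Type u) [Field k] where
  plane : Plane k
  line : Projectivization k (k × k)

/-- The vanishing locus in `𝔸² × ℙ¹` of a polynomial in the variables `x, y, a, b`
(the locus of points all of whose homogeneous representatives are zeros; for a
polynomial bihomogeneous in `(a, b)` this is the usual vanishing locus). -/
def biLocus (k : Type u) [Field k] (f : MvPolynomial (Fin 4) k) : Set (ProdSpace k) :=
  {q | ∀ (w : k × k) (hw : w ≠ 0), Projectivization.mk k w hw = q.line →
    MvPolynomial.eval ![q.plane.x, q.plane.y, w.1, w.2] f = 0}

/-- The Zariski topology on `𝔸² × ℙ¹`. -/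
instance (k : Type u) [Field k] : TopologicalSpace (ProdSpace k) :=
  .generateFrom {U | ∃ f : MvPolynomial (Fin 4) k, U = (biLocus k f)ᶜ}

/-- The blow-up `B ⊆ 𝔸² × ℙ¹` of the affine plane at the origin:
the closed set `{((x,y),[a:b]) : x·b = y·a}`. -/
def blowUpSet (k : Type u) [Field k] : Set (ProdSpace k) :=
  biLocus k (MvPolynomial.X 0 * MvPolynomial.X 3 - MvPolynomial.X 1 * MvPolynomial.X 2)

/-- The point `∞ = ((0,0),[0:1])` of the exceptional line. -/
def inftyPoint (k : Type u) [Field k] : ProdSpace k :=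
  ⟨⟨0, 0⟩, Projectivization.mk k ((0 : k), (1 : k))
    (fun h => one_ne_zero (congrArg Prod.snd h))⟩

/-- `B ∖ {∞}`, with the subspace Zariski topology. -/
def BlowUpMinusInfty (k : Type u) [Field k] : Type u :=
  {q : ProdSpace k // q ∈ blowUpSet k ∧ q ≠ inftyPoint k}

instance (k : Type u) [Field k] : TopologicalSpace (BlowUpMinusInfty k) :=
  instTopologicalSpaceSubtype

/-- The projection `p : B ∖ {∞} → 𝔸²`. -/
def blowDown (k : Type u) [Field k] : BlowUpMinusInfty k → Plane k :=
  fun q => q.val.plane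

/-- A curve: a closed irreducible subset of topological Krull dimension `1`. -/
def IsIrreducibleCurve {X : Type u} [TopologicalSpace X] (C : Set X) : Prop :=
  IsClosed C ∧ IsIrreducible C ∧ topologicalKrullDim C = 1

/-- The curve covering property of a map of topological spaces. -/
def CurveCoveringProperty {X Y : Type u} [TopologicalSpace X] [TopologicalSpace Y]
    (p : X → Y) : Prop :=
  ∀ C : Set Y, IsIrreducibleCurve C → ∀ y ∈ C, IsClosed ({y} : Set Y) →
    ∃ C' : Set X, IsIrreducibleCurve C' ∧ y ∈ p '' C' ∧
      p '' C' ⊆ C ∧ C ⊆ closure (p '' C')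

/-- The coordinate axis `{x = 0} ⊆ 𝔸²`. -/
def yAxis (k : Type u) [Field k] : Set (Plane k) := {p | p.x = 0}

/-- The origin of `𝔸²`. -/
def originPlane (k : Type u) [Field k] : Plane k := ⟨0, 0⟩

section Aux

open MvPolynomial

variable {k : Type u} [Field k]

theorem Plane.ext' {p q : Plane k} (hx : p.x = q.x) (hy : p.y = q.y) : p = q := by
  cases p; cases q; cases hx; cases hy; rfl

theorem mem_planeLocus {f : MvPolynomial (Fin 2) k} {p : Plane k} :
    p ∈ planeLocus k f ↔ MvPolynomial.eval ![p.x, p.y] f = 0 := Iff.rfl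

theorem isClosed_planeLocus (f : MvPolynomial (Fin 2) k) : IsClosed (planeLocus k f) := by
  rw [← isOpen_compl_iff]
  exact TopologicalSpace.GenerateOpen.basic _ ⟨f, rfl⟩

theorem isClosed_biLocus (f : MvPolynomial (Fin 4) k) : IsClosed (biLocus k f) := by
  rw [← isOpen_compl_iff]
  exact TopologicalSpace.GenerateOpen.basic _ ⟨f, rfl⟩

/-- Every open set of the plane containing a point contains a basic open around it. -/
theorem plane_open_elim {O : Set (Plane k)} (hO : IsOpen O) :
    ∀ p ∈ O, ∃ f : MvPolynomial (Fin 2) k,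
      MvPolynomial.eval ![p.x, p.y] f ≠ 0 ∧ (planeLocus k f)ᶜ ⊆ O := by
  have h : TopologicalSpace.GenerateOpen
      {U | ∃ f : MvPolynomial (Fin 2) k, U = (planeLocus k f)ᶜ} O := hO
  induction h with
  | basic U hU =>
      obtain ⟨f, rfl⟩ := hU
      exact fun p hp => ⟨f, hp, subset_rfl⟩
  | univ =>
      intro p _
      refine ⟨1, ?_, fun _ _ => trivial⟩
      simp
  | inter U V hU hV ihU ihV =>
      intro p hp
      obtain ⟨f, hf, hfs⟩ := ihU hU p hp.1
      obtain ⟨g, hg, hgs⟩ := ihV hV p hp.2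
      refine ⟨f * g, by simpa using mul_ne_zero hf hg, fun q hq => ?_⟩
      rw [Set.mem_compl_iff, mem_planeLocus, map_mul] at hq
      obtain ⟨h1, h2⟩ := mul_ne_zero_iff.mp hq
      exact ⟨hfs h1, hgs h2⟩
  | sUnion S hS ih =>
      intro p hp
      obtain ⟨U, hU, hpU⟩ := hp
      obtain ⟨f, hf, hfs⟩ := ih U hU (hS U hU) p hpU
      exact ⟨f, hf, hfs.trans (Set.subset_sUnion_of_mem hU)⟩

/-- Restriction of a polynomial in `x, y` to the line `x = 0`, as a one-variable polynomial. -/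
def resY (f : MvPolynomial (Fin 2) k) : Polynomial k :=
  MvPolynomial.aeval ![(0 : Polynomial k), Polynomial.X] f

theorem resY_eval (f : MvPolynomial (Fin 2) k) (y : k) :
    (resY f).eval y = MvPolynomial.eval ![0, y] f := by
  rw [resY, ← Polynomial.coe_aeval_eq_eval,
    MvPolynomial.comp_aeval_apply (f := ![(0 : Polynomial k), Polynomial.X])
      (Polynomial.aeval y) f,
    show (MvPolynomial.eval ![(0 : k), y]) f = MvPolynomial.aeval ![(0 : k), y] f by
      rw [← MvPolynomial.coe_aeval_eq_eval]; rfl]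
  congr 1
  ext i
  fin_cases i <;> simp

theorem exists_good [Infinite k] (f g : MvPolynomial (Fin 2) k) {c d : k}
    (hf : MvPolynomial.eval ![0, c] f ≠ 0) (hg : MvPolynomial.eval ![0, d] g ≠ 0)
    (S : Set k) (hS : S.Finite) :
    ∃ y, y ∉ S ∧ MvPolynomial.eval ![0, y] f ≠ 0 ∧ MvPolynomial.eval ![0, y] g ≠ 0 := by
  have hF : resY f ≠ 0 := fun h => hf (by rw [← resY_eval, h, Polynomial.eval_zero])
  have hG : resY g ≠ 0 := fun h => hg (by rw [← resY_eval, h, Polynomial.eval_zero])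
  have hT : (S ∪ ({y | (resY f).IsRoot y} ∪ {y | (resY g).IsRoot y})).Finite :=
    hS.union ((Polynomial.finite_setOf_isRoot hF).union (Polynomial.finite_setOf_isRoot hG))
  obtain ⟨y, hy⟩ := hT.infinite_compl.nonempty
  simp only [Set.mem_compl_iff, Set.mem_union, Set.mem_setOf_eq, not_or] at hy
  exact ⟨y, hy.1, fun h => hy.2.1 (by rwa [Polynomial.IsRoot, resY_eval]),
    fun h => hy.2.2 (by rwa [Polynomial.IsRoot, resY_eval])⟩

end Aux
section Aux2

variable {k : Type u} [Field k]

theorem isClosed_singleton_plane (p0 : Plane k) : IsClosed ({p0} : Set (Plane k)) := by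
  have : ({p0} : Set (Plane k)) =
      planeLocus k (MvPolynomial.X 0 - MvPolynomial.C p0.x) ∩
      planeLocus k (MvPolynomial.X 1 - MvPolynomial.C p0.y) := by
    ext p
    simp only [Set.mem_singleton_iff, Set.mem_inter_iff, mem_planeLocus, map_sub,
      MvPolynomial.eval_X, MvPolynomial.eval_C, sub_eq_zero]
    constructor
    · rintro rfl; simp
    · rintro ⟨h1, h2⟩
      exact Plane.ext' (by simpa using h1) (by simpa using h2)
  rw [this]
  exact (isClosed_planeLocus _).inter (isClosed_planeLocus _)

theorem isClosed_yAxis : IsClosed (yAxis k) := by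
  have : yAxis k = planeLocus k (MvPolynomial.X 0) := by
    ext p; simp [yAxis, mem_planeLocus]
  rw [this]; exact isClosed_planeLocus _

theorem isIrreducible_yAxis [Infinite k] : IsIrreducible (yAxis k) := by
  constructor
  · exact ⟨⟨0, 0⟩, rfl⟩
  · intro U V hU hV ⟨p, hpA, hpU⟩ ⟨q, hqA, hqV⟩
    obtain ⟨f, hf, hfs⟩ := plane_open_elim hU p hpU
    obtain ⟨g, hg, hgs⟩ := plane_open_elim hV q hqV
    rw [show p.x = (0:k) from hpA] at hf
    rw [show q.x = (0:k) from hqA] at hg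
    obtain ⟨y, -, hyf, hyg⟩ := exists_good f g hf hg ∅ Set.finite_empty
    exact ⟨⟨0, y⟩, rfl, hfs hyf, hgs hyg⟩

theorem t1_yAxis : T1Space ↥(yAxis k) := by
  constructor
  intro z
  have : ({z} : Set ↥(yAxis k)) = Subtype.val ⁻¹' {z.val} := by
    ext w; simp [Subtype.val_inj]
  rw [this]
  exact (isClosed_singleton_plane _).preimage continuous_subtype_val

theorem closed_in_yAxis_finite {s : Set ↥(yAxis k)} (hs : IsClosed s) (hne : s ≠ Set.univ) :
    s.Finite := by
  obtain ⟨C, hC, rfl⟩ := isClosed_induced_iff.mp hs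
  obtain ⟨u, hu⟩ : ∃ u : ↥(yAxis k), u.val ∉ C := by
    by_contra h
    push_neg at h
    exact hne (Set.eq_univ_iff_forall.mpr fun z => h z)
  obtain ⟨f, hf, hfs⟩ := plane_open_elim hC.isOpen_compl u.val hu
  rw [show u.val.x = (0:k) from u.property] at hf
  have hF : resY f ≠ 0 := fun h => hf (by rw [← resY_eval, h, Polynomial.eval_zero])
  have hsub : Subtype.val ⁻¹' C ⊆ (fun z : ↥(yAxis k) => z.val.y) ⁻¹' {y | (resY f).IsRoot y} := by
    intro z hz
    have hzC : z.val ∈ C := hz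
    have : z.val ∈ planeLocus k f := by
      by_contra h
      exact (hfs h) hzC
    rw [mem_planeLocus, show z.val.x = (0:k) from z.property] at this
    simpa [Polynomial.IsRoot, resY_eval] using this
  refine Set.Finite.subset (Set.Finite.preimage ?_ (Polynomial.finite_setOf_isRoot hF)) hsub
  intro a _ b _ hab
  exact Subtype.ext (Plane.ext' (a.property.trans b.property.symm) hab)

theorem irred_closed_yAxis_classify {t : Set ↥(yAxis k)} (h1 : IsIrreducible t)
    (h2 : IsClosed t) : t = Set.univ ∨ ∃ z, t = {z} := by
  haveI := t1_yAxis (k := k)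
  by_cases ht : t = Set.univ
  · exact Or.inl ht
  right
  have hfin := closed_in_yAxis_finite h2 ht
  obtain ⟨a, ha⟩ := h1.nonempty
  refine ⟨a, Set.Subset.antisymm ?_ (Set.singleton_subset_iff.mpr ha)⟩
  rcases isPreirreducible_iff_isClosed_union_isClosed.mp h1.2 {a} (t \ {a})
    isClosed_singleton ((hfin.diff).isClosed)
    (fun z hz => by by_cases h : z = a <;> simp [h, hz]) with h | h
  · exact h
  · exact absurd (h ha) (by simp)

end Aux2
section Aux3

variable {k : Type u} [Field k]

theorem yAxis_krullDim [Infinite k] : topologicalKrullDim ↥(yAxis k) = 1 := by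
  have hirr := isIrreducible_yAxis (k := k)
  haveI := Subtype.irreducibleSpace hirr
  haveI := t1_yAxis (k := k)
  set z0 : ↥(yAxis k) := ⟨⟨0, 0⟩, rfl⟩ with hz0
  set z1 : ↥(yAxis k) := ⟨⟨0, 1⟩, rfl⟩ with hz1
  have hz01 : z0 ≠ z1 := by
    intro h
    have : (0 : k) = 1 := congrArg (fun z : ↥(yAxis k) => z.val.y) h
    exact zero_ne_one this
  set a : TopologicalSpace.IrreducibleCloseds ↥(yAxis k) :=
    ⟨{z0}, isIrreducible_singleton, isClosed_singleton⟩ with ha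
  set b : TopologicalSpace.IrreducibleCloseds ↥(yAxis k) :=
    ⟨Set.univ, IrreducibleSpace.isIrreducible_univ _, isClosed_univ⟩ with hb
  have hab : a < b := by
    refine lt_of_le_of_ne (fun z _ => trivial) ?_
    intro h
    have hcar : ({z0} : Set ↥(yAxis k)) = Set.univ := congrArg (fun c : TopologicalSpace.IrreducibleCloseds ↥(yAxis k) => (c : Set ↥(yAxis k))) h
    have : z1 ∈ ({z0} : Set ↥(yAxis k)) := hcar ▸ Set.mem_univ z1
    exact hz01 (Set.mem_singleton_iff.mp this).symm
  apply le_antisymm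
  · rw [topologicalKrullDim, Order.krullDim]
    apply iSup_le
    intro p
    rw [show (1 : WithBot ℕ∞) = ((1 : ℕ) : WithBot ℕ∞) from rfl, Nat.cast_le]
    by_contra hlen
    push_neg at hlen
    have h2 : 2 ≤ p.length := hlen
    have h01 : p ⟨0, by omega⟩ < p ⟨1, by omega⟩ := p.strictMono (by simp [Fin.lt_def])
    have h12 : p ⟨1, by omega⟩ < p ⟨2, by omega⟩ := p.strictMono (by simp [Fin.lt_def])
    rcases irred_closed_yAxis_classify (p ⟨1, by omega⟩).isIrreducible
      (p ⟨1, by omega⟩).isClosed with h | ⟨z, hz⟩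
    · have hle : p ⟨2, by omega⟩ ≤ p ⟨1, by omega⟩ := by
        rw [← SetLike.coe_subset_coe, h]
        exact Set.subset_univ _
      exact absurd (lt_of_lt_of_le h12 hle) (lt_irrefl _)
    · have hsub : (p ⟨0, by omega⟩ : Set ↥(yAxis k)) ⊆ {z} := by
        rw [← hz, SetLike.coe_subset_coe]
        exact le_of_lt h01
      obtain ⟨w, hw⟩ := (p ⟨0, by omega⟩).isIrreducible.nonempty
      have hco : (p ⟨0, by omega⟩ : Set ↥(yAxis k)) = {z} := by
        apply Set.Subset.antisymm hsub
        intro v hv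
        rw [Set.mem_singleton_iff] at hv
        subst hv
        have := hsub hw
        rw [Set.mem_singleton_iff] at this
        exact this ▸ hw
      have heq : p ⟨0, by omega⟩ = p ⟨1, by omega⟩ :=
        TopologicalSpace.IrreducibleCloseds.ext (hco.trans hz.symm)
      exact absurd (heq ▸ h01) (lt_irrefl _)
  · have := Order.LTSeries.length_le_krullDim ((RelSeries.singleton _ a).snoc b hab : LTSeries _)
    have hl : (((RelSeries.singleton _ a).snoc b hab : LTSeries _)).length = 1 := rfl
    rw [hl] at this
    exact_mod_cast this

end Aux3
section Aux4

open MvPolynomial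

variable {k : Type u} [Field k]

theorem ProdSpace.ext' {p q : ProdSpace k} (h1 : p.plane = q.plane) (h2 : p.line = q.line) :
    p = q := by
  cases p; cases q; cases h1; cases h2; rfl

theorem line_eq_infty {r : k × k} (hr : r ≠ 0) (h1 : r.1 = 0) :
    Projectivization.mk k r hr = (inftyPoint k).line := by
  have hr2 : r.2 ≠ 0 := by
    intro h2
    exact hr (Prod.ext h1 h2)
  rw [inftyPoint, Projectivization.mk_eq_mk_iff]
  refine ⟨Units.mk0 r.2 hr2, ?_⟩
  ext
  · simp [Units.smul_def, h1]
  · simp [Units.smul_def]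

/-- The strict transform of the `y`-axis (minus the origin), inside `B ∖ {∞}`. -/
def ASet (k : Type u) [Field k] : Set (BlowUpMinusInfty k) :=
  Subtype.val ⁻¹' (biLocus k (X 0) ∩ biLocus k (X 2))

/-- The exceptional line minus `∞`, inside `B ∖ {∞}`. -/
def ESet (k : Type u) [Field k] : Set (BlowUpMinusInfty k) :=
  Subtype.val ⁻¹' (biLocus k (X 0) ∩ biLocus k (X 1))

theorem isClosed_ASet : IsClosed (ASet k) :=
  ((isClosed_biLocus _).inter (isClosed_biLocus _)).preimage continuous_subtype_val

theorem isClosed_ESet : IsClosed (ESet k) :=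
  ((isClosed_biLocus _).inter (isClosed_biLocus _)).preimage continuous_subtype_val

theorem mem_ESet_iff {q : BlowUpMinusInfty k} :
    q ∈ ESet k ↔ q.val.plane.x = 0 ∧ q.val.plane.y = 0 := by
  constructor
  · rintro ⟨h0, h1⟩
    have hx := h0 q.val.line.rep q.val.line.rep_nonzero (Projectivization.mk_rep _)
    have hy := h1 q.val.line.rep q.val.line.rep_nonzero (Projectivization.mk_rep _)
    simp only [eval_X] at hx hy
    exact ⟨by simpa using hx, by simpa using hy⟩
  · rintro ⟨hx, hy⟩
    exact ⟨fun w hw hmk => by simpa using hx, fun w hw hmk => by simpa using hy⟩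

theorem mem_ASet_iff {q : BlowUpMinusInfty k} :
    q ∈ ASet k ↔ q.val.plane.x = 0 ∧ q.val.plane.y ≠ 0 := by
  constructor
  · rintro ⟨h0, h2⟩
    have hx := h0 q.val.line.rep q.val.line.rep_nonzero (Projectivization.mk_rep _)
    simp only [eval_X] at hx
    have hx' : q.val.plane.x = 0 := by simpa using hx
    refine ⟨hx', fun hy => ?_⟩
    -- then q.val = inftyPoint, contradiction
    apply q.property.2
    apply ProdSpace.ext'
    · exact Plane.ext' hx' hy
    · have hr := h2 q.val.line.rep q.val.line.rep_nonzero (Projectivization.mk_rep _)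
      have hr1 : q.val.line.rep.1 = 0 := by simpa using hr
      rw [← Projectivization.mk_rep q.val.line]
      exact line_eq_infty _ hr1
  · rintro ⟨hx, hy⟩
    refine ⟨fun w hw hmk => by simpa using hx, fun w hw hmk => ?_⟩
    have hb := q.property.1 w hw hmk
    simp only [map_sub, map_mul, eval_X] at hb
    have hb' : q.val.plane.x * w.2 - q.val.plane.y * w.1 = 0 := by simpa using hb
    rw [hx, zero_mul, zero_sub, neg_eq_zero] at hb'
    have : w.1 = 0 := by
      rcases mul_eq_zero.mp hb' with h | h
      · exact absurd h hy
      · exact h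
    simpa using this

theorem preimage_axis :
    blowDown k ⁻¹' (yAxis k \ {originPlane k}) = ASet k := by
  ext q
  rw [mem_ASet_iff]
  simp only [Set.mem_preimage, Set.mem_diff, Set.mem_singleton_iff]
  constructor
  · rintro ⟨hx, hne⟩
    refine ⟨hx, fun hy => hne (Plane.ext' hx hy)⟩
  · rintro ⟨hx, hy⟩
    exact ⟨hx, fun h => hy (congrArg Plane.y h)⟩

theorem origin_in_closure [Infinite k] :
    originPlane k ∈ closure (yAxis k \ {originPlane k}) := by
  rw [mem_closure_iff]
  intro O hO hmem
  obtain ⟨f, hf, hfs⟩ := plane_open_elim hO _ hmem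
  have hf' : MvPolynomial.eval ![(0:k), 0] f ≠ 0 := hf
  obtain ⟨y, hyS, hyf, -⟩ := exists_good f f hf' hf' {0} (Set.finite_singleton 0)
  refine ⟨⟨0, y⟩, ?_, ?_, ?_⟩
  · exact hfs hyf
  · rfl
  · intro h
    exact hyS (congrArg Plane.y h)

end Aux4
/-- The projection `p : B ∖ {∞} → 𝔸²` from the blow-up of `𝔸²` at the origin minus the
point `∞ = ((0,0),[0:1])` is surjective, but fails the curve covering property: for the
irreducible curve `Y' = {x = 0}` and the closed point `y = (0,0) ∈ Y'` there is no
irreducible curve `X' ⊆ B ∖ {∞}` with `y ∈ p(X') ⊆ Y'` and `p(X')` dense in `Y'`.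
In particular `p` is surjective but not submersive. -/
theorem blowDown_not_curve_covering (k : Type u) [Field k] [IsAlgClosed k] :
    Function.Surjective (blowDown k) ∧
    IsIrreducibleCurve (yAxis k) ∧
    originPlane k ∈ yAxis k ∧
    IsClosed ({originPlane k} : Set (Plane k)) ∧
    ¬ (∃ C' : Set (BlowUpMinusInfty k), IsIrreducibleCurve C' ∧
        originPlane k ∈ blowDown k '' C' ∧ blowDown k '' C' ⊆ yAxis k ∧
        yAxis k ⊆ closure (blowDown k '' C')) ∧
    ¬ CurveCoveringProperty (blowDown k) ∧
    ¬ Topology.IsQuotientMap (blowDown k) := by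
  have hcurve : IsIrreducibleCurve (yAxis k) :=
    ⟨isClosed_yAxis, isIrreducible_yAxis, yAxis_krullDim⟩
  have hmain : ¬ (∃ C' : Set (BlowUpMinusInfty k), IsIrreducibleCurve C' ∧
      originPlane k ∈ blowDown k '' C' ∧ blowDown k '' C' ⊆ yAxis k ∧
      yAxis k ⊆ closure (blowDown k '' C')) := by
    rintro ⟨C', ⟨hCl, hIrr, hdim⟩, ⟨q0, hq0C, hq0p⟩, hsub, hdense⟩
    have hcover : C' ⊆ ASet k ∪ ESet k := by
      intro q hq
      have hx : q.val.plane.x = 0 := hsub ⟨q, hq, rfl⟩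
      by_cases hy : q.val.plane.y = 0
      · exact Or.inr (mem_ESet_iff.mpr ⟨hx, hy⟩)
      · exact Or.inl (mem_ASet_iff.mpr ⟨hx, hy⟩)
    rcases isPreirreducible_iff_isClosed_union_isClosed.mp hIrr.2 _ _
      isClosed_ASet isClosed_ESet hcover with h | h
    · have hy0 : q0.val.plane.y = 0 := congrArg Plane.y hq0p
      exact (mem_ASet_iff.mp (h hq0C)).2 hy0
    · have him : blowDown k '' C' ⊆ {originPlane k} := by
        rintro _ ⟨q, hq, rfl⟩
        have he := mem_ESet_iff.mp (h hq)
        exact Set.mem_singleton_iff.mpr (Plane.ext' he.1 he.2)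
      have hax : yAxis k ⊆ {originPlane k} :=
        hdense.trans (closure_minimal him (isClosed_singleton_plane _))
      have h1 : (⟨0, 1⟩ : Plane k) ∈ yAxis k := rfl
      have := congrArg Plane.y (Set.mem_singleton_iff.mp (hax h1))
      exact one_ne_zero this
  refine ⟨?_, hcurve, rfl, isClosed_singleton_plane _, hmain, ?_, ?_⟩
  · -- surjectivity
    intro pl
    by_cases h : pl.x = 0 ∧ pl.y = 0
    · refine ⟨⟨⟨pl, Projectivization.mk k ((1 : k), (0 : k))
        (fun hh => one_ne_zero (congrArg Prod.fst hh))⟩, ?_, ?_⟩, rfl⟩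
      · intro w hw hmk
        simp [h.1, h.2]
      · intro he
        have hline := congrArg ProdSpace.line he
        rw [inftyPoint] at hline
        obtain ⟨a, ha⟩ := (Projectivization.mk_eq_mk_iff k _ _ _ _).mp hline
        have := congrArg Prod.fst ha
        simp [Units.smul_def] at this
    · have hne : ((pl.x, pl.y) : k × k) ≠ 0 := by
        intro hh
        exact h ⟨congrArg Prod.fst hh, congrArg Prod.snd hh⟩
      refine ⟨⟨⟨pl, Projectivization.mk k (pl.x, pl.y) hne⟩, ?_, ?_⟩, rfl⟩
      · intro w hw hmk
        obtain ⟨a, rfl⟩ := (Projectivization.mk_eq_mk_iff k _ _ _ _).mp hmk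
        simp [Units.smul_def]
        ring
      · intro he
        have hpl := congrArg ProdSpace.plane he
        rw [inftyPoint] at hpl
        exact h ⟨congrArg Plane.x hpl, congrArg Plane.y hpl⟩
  · -- not CCP
    intro h
    exact hmain (h (yAxis k) hcurve (originPlane k) rfl (isClosed_singleton_plane _))
  · -- not a quotient map
    intro hq
    have hopen : IsOpen ((yAxis k \ {originPlane k})ᶜ) := by
      rw [← hq.isOpen_preimage, Set.preimage_compl, preimage_axis]
      exact isClosed_ASet.isOpen_compl
    have hcl : IsClosed (yAxis k \ {originPlane k}) := isOpen_compl_iff.mp hopen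
    have hoc := origin_in_closure (k := k)
    rw [hcl.closure_eq] at hoc
    exact hoc.2 rfl
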